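/- For every S ∈ RatFunc ℂ, every n ∈ ℕ, and every j ∈ {1, 2, …, 2^n}, there exists a unique rational function S_{j,n} ∈ RatFunc ℂ whose Laurent coefficients satisfy a_k(S_{j,n}) = a_{2^n·k + j − 1}(S) for all k ∈ ℤ. (This is the decomposition S(x) = Σ_{j=1}^{2^n} x^{j−1} S_{j,n}(x^{2^n}).) -/

import Mathlib

noncomputable def coeffL (R : RatFunc ℂ) (n : ℤ) : ℂ :=
  ((R : LaurentSeries ℂ)).coeff n

namespace Stmt1Aux

open Polynomial HahnSeries

/-- Doubling as an additive monoid hom on `ℤ`. -/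
def dbl : ℤ →+ ℤ where
  toFun k := 2 * k
  map_zero' := by ring
  map_add' a b := by ring

lemma dbl_inj : Function.Injective dbl := fun a b h => by
  simp only [dbl, AddMonoidHom.coe_mk, ZeroHom.coe_mk] at h; omega

lemma dbl_mono : ∀ g g' : ℤ, dbl g ≤ dbl g' ↔ g ≤ g' := fun g g' => by
  simp only [dbl, AddMonoidHom.coe_mk, ZeroHom.coe_mk]; omega

/-- The ring hom on Laurent series sending `X` to `X^2` (coefficient stretching). -/
noncomputable def E2 : LaurentSeries ℂ →+* LaurentSeries ℂ :=
  HahnSeries.embDomainRingHom dbl dbl_inj dbl_mono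

lemma E2_coeff_even (f : LaurentSeries ℂ) (k : ℤ) : (E2 f).coeff (2 * k) = f.coeff k :=
  HahnSeries.embDomain_coeff

lemma E2_coeff_odd (f : LaurentSeries ℂ) (m : ℤ) (hm : ¬ (2 ∣ m)) : (E2 f).coeff m = 0 := by
  refine HahnSeries.embDomain_notin_range ?_
  rintro ⟨a, rfl⟩
  exact hm ⟨a, rfl⟩

lemma E2_single : E2 (single (1 : ℤ) (1 : ℂ)) = single (2 : ℤ) (1 : ℂ) :=
  HahnSeries.embDomain_single

lemma X_mul_coeff (f : LaurentSeries ℂ) (m : ℤ) :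
    ((single (1 : ℤ) (1 : ℂ)) * f).coeff m = f.coeff (m - 1) := by
  have h := HahnSeries.coeff_single_mul_add (r := (1 : ℂ)) (x := f) (b := (1 : ℤ)) (a := m - 1)
  rw [show (m - 1) + (1 : ℤ) = m by ring] at h
  simpa using h

lemma coe_poly_coeff (p : ℂ[X]) (m : ℤ) :
    ((algebraMap ℂ[X] (RatFunc ℂ) p : RatFunc ℂ) : LaurentSeries ℂ).coeff m
      = if 0 ≤ m then p.coeff m.toNat else 0 := by
  rw [show (algebraMap (Polynomial ℂ) (RatFunc ℂ) p : RatFunc ℂ) = (p : RatFunc ℂ) from rfl, ← RatFunc.coe_coe]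
  split_ifs with h
  · obtain ⟨k, rfl⟩ := Int.eq_ofNat_of_zero_le h
    rw [LaurentSeries.coeff_coe_powerSeries, Int.toNat_natCast, Polynomial.coeff_coe]
  · rw [show ((p : PowerSeries ℂ) : LaurentSeries ℂ) = HahnSeries.ofPowerSeries ℤ ℂ (p : PowerSeries ℂ) from rfl,
      HahnSeries.ofPowerSeries_apply, HahnSeries.embDomain_notin_range]
    rintro ⟨a, rfl⟩
    simp at h

/-- `T` decomposes as `U (X²) + X · V (X²)` at the Laurent series level. -/
def Good (T : RatFunc ℂ) : Prop :=
  ∃ U V : RatFunc ℂ, (T : LaurentSeries ℂ) =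
    E2 (U : LaurentSeries ℂ) + single (1 : ℤ) (1 : ℂ) * E2 (V : LaurentSeries ℂ)

lemma good_poly (p : ℂ[X]) : Good (algebraMap ℂ[X] (RatFunc ℂ) p) := by
  refine ⟨algebraMap _ _ (p.contract 2), algebraMap _ _ (p.divX.contract 2), ?_⟩
  ext m
  rw [HahnSeries.coeff_add, X_mul_coeff, coe_poly_coeff]
  rcases Int.even_or_odd m with ⟨k, hk⟩ | ⟨k, hk⟩
  · have hk2 : m = 2 * k := by omega
    subst hk2
    rw [E2_coeff_even, E2_coeff_odd _ _ (by omega), coe_poly_coeff, add_zero]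
    by_cases h : 0 ≤ k
    · rw [if_pos h, if_pos (by omega), Polynomial.coeff_contract two_ne_zero,
        show (2 * k).toNat = k.toNat * 2 by omega]
    · rw [if_neg h, if_neg (by omega)]
  · subst hk
    rw [E2_coeff_odd _ _ (by omega), zero_add,
      show 2 * k + 1 - 1 = 2 * k by ring, E2_coeff_even, coe_poly_coeff]
    by_cases h : 0 ≤ k
    · rw [if_pos h, if_pos (by omega), Polynomial.coeff_contract two_ne_zero,
        Polynomial.coeff_divX, show (2 * k + 1).toNat = k.toNat * 2 + 1 by omega]
    · rw [if_neg h, if_neg (by omega)]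

lemma good_mul {A B : RatFunc ℂ} (hA : Good A) (hB : Good B) : Good (A * B) := by
  obtain ⟨U, V, hU⟩ := hA
  obtain ⟨U', V', hU'⟩ := hB
  refine ⟨U * U' + RatFunc.X * (V * V'), U * V' + U' * V, ?_⟩
  rw [map_mul, hU, hU']
  simp only [map_add (@algebraMap (RatFunc ℂ) (LaurentSeries ℂ) _ _ (RatFunc.liftAlgebra _ _)), map_mul (@algebraMap (RatFunc ℂ) (LaurentSeries ℂ) _ _ (RatFunc.liftAlgebra _ _)), RatFunc.coe_X]
  rw [map_add, map_mul, map_mul, map_mul, map_add, map_mul, map_mul, E2_single,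
    show (single (2:ℤ) (1:ℂ)) = single (1:ℤ) (1:ℂ) * single (1:ℤ) (1:ℂ) by
      rw [HahnSeries.single_mul_single, one_mul]; norm_num]
  ring

lemma X_not_sq (W : RatFunc ℂ) : W ^ 2 ≠ RatFunc.X := by
  intro h
  have hW : W ≠ 0 := by
    rintro rfl
    rw [zero_pow two_ne_zero] at h
    exact RatFunc.X_ne_zero h.symm
  have hWL : (W : LaurentSeries ℂ) ≠ 0 := fun h0 => hW ((@algebraMap (RatFunc ℂ) (LaurentSeries ℂ) _ _ (RatFunc.liftAlgebra _ _)).injective (by simpa using h0))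
  have := congrArg (fun T : RatFunc ℂ => (T : LaurentSeries ℂ).order) h
  simp only [map_pow, RatFunc.coe_X] at this
  rw [pow_two, HahnSeries.order_mul hWL hWL, HahnSeries.order_single one_ne_zero] at this
  omega

lemma good_inv {A : RatFunc ℂ} (hA : Good A) (hA0 : A ≠ 0) : Good A⁻¹ := by
  obtain ⟨U, V, h⟩ := hA
  set D : RatFunc ℂ := U ^ 2 - RatFunc.X * V ^ 2 with hDdef
  have hD : D ≠ 0 := by
    intro hD0
    have hUV : U ^ 2 = RatFunc.X * V ^ 2 := by
      rw [hDdef] at hD0; linear_combination hD0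
    by_cases hV : V = 0
    · have hU : U = 0 := by
        have := hUV; rw [hV] at this; simpa [pow_eq_zero_iff] using this
      apply hA0
      apply (@algebraMap (RatFunc ℂ) (LaurentSeries ℂ) _ _ (RatFunc.liftAlgebra _ _)).injective
      rw [h, hU, hV]
      simp
    · refine X_not_sq (U / V) ?_
      field_simp
      linear_combination hUV
  refine ⟨U / D, -(V / D), ?_⟩
  have hDL : (D : LaurentSeries ℂ) ≠ 0 := fun h0 => hD ((@algebraMap (RatFunc ℂ) (LaurentSeries ℂ) _ _ (RatFunc.liftAlgebra _ _)).injective (by simpa using h0))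
  have hd2 : E2 (D : LaurentSeries ℂ) ≠ 0 := fun h0 => hDL (E2.injective (by simpa using h0))
  have key : (A : LaurentSeries ℂ) *
      (E2 ((U / D : RatFunc ℂ) : LaurentSeries ℂ)
        + single (1 : ℤ) (1 : ℂ) * E2 ((-(V / D) : RatFunc ℂ) : LaurentSeries ℂ)) = 1 := by
    rw [h, show ((U / D : RatFunc ℂ) : LaurentSeries ℂ)
          = (U : LaurentSeries ℂ) / (D : LaurentSeries ℂ) from map_div₀ _ _ _,
      show ((-(V / D) : RatFunc ℂ) : LaurentSeries ℂ)
          = -((V : LaurentSeries ℂ) / (D : LaurentSeries ℂ)) from by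
        rw [map_neg, map_div₀]]
    rw [map_neg, map_div₀, map_div₀]
    set a := E2 (U : LaurentSeries ℂ) with ha
    set b := E2 (V : LaurentSeries ℂ) with hb
    set c := E2 (D : LaurentSeries ℂ) with hc
    set x : LaurentSeries ℂ := single (1 : ℤ) (1 : ℂ) with hx
    have hdef : c = a ^ 2 - (x * x) * b ^ 2 := by
      rw [hc, hDdef]
      simp only [map_sub (@algebraMap (RatFunc ℂ) (LaurentSeries ℂ) _ _ (RatFunc.liftAlgebra _ _)), map_mul (@algebraMap (RatFunc ℂ) (LaurentSeries ℂ) _ _ (RatFunc.liftAlgebra _ _)), map_pow (@algebraMap (RatFunc ℂ) (LaurentSeries ℂ) _ _ (RatFunc.liftAlgebra _ _)), RatFunc.coe_X]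
      rw [map_sub, map_mul, map_pow, map_pow, ha, hb, hx, E2_single,
        HahnSeries.single_mul_single, one_mul]
      norm_num
    have h1 : a / c + x * -(b / c) = (a - x * b) / c := by
      ring
    rw [h1, div_eq_mul_inv, ← mul_assoc,
      show (a + x * b) * ((a - x * b)) = c from by rw [hdef]; ring,
      mul_inv_cancel₀ hd2]
  have hAL : (A : LaurentSeries ℂ) ≠ 0 :=
    fun h0 => hA0 ((@algebraMap (RatFunc ℂ) (LaurentSeries ℂ) _ _ (RatFunc.liftAlgebra _ _)).injective (by simpa using h0))
  have hinv : ((A⁻¹ : RatFunc ℂ) : LaurentSeries ℂ) = ((A : RatFunc ℂ) : LaurentSeries ℂ)⁻¹ := by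
    rw [map_inv₀]
  rw [hinv, inv_eq_of_mul_eq_one_right key]

lemma good_all (T : RatFunc ℂ) : Good T := by
  induction T using RatFunc.induction_on with
  | f p q hq =>
    rw [div_eq_mul_inv]
    refine good_mul (good_poly p) (good_inv (good_poly q) ?_)
    simpa using hq

lemma dec (q : ℤ) (hq : q = 0 ∨ q = 1) (T : RatFunc ℂ) :
    ∃ U : RatFunc ℂ, ∀ k : ℤ, coeffL U k = coeffL T (2 * k + q) := by
  obtain ⟨U, V, h⟩ := good_all T
  rcases hq with rfl | rfl
  · refine ⟨U, fun k => ?_⟩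
    simp only [coeffL, add_zero, h, HahnSeries.coeff_add, X_mul_coeff]
    rw [E2_coeff_even, E2_coeff_odd _ _ (by omega), add_zero]
  · refine ⟨V, fun k => ?_⟩
    simp only [coeffL, h, HahnSeries.coeff_add, X_mul_coeff]
    rw [E2_coeff_odd _ _ (by omega), show 2 * k + 1 - 1 = 2 * k by ring, E2_coeff_even, zero_add]

lemma main (n : ℕ) : ∀ r : ℤ, 0 ≤ r → r < 2 ^ n → ∀ S : RatFunc ℂ,
    ∃ T : RatFunc ℂ, ∀ k : ℤ, coeffL T k = coeffL S (2 ^ n * k + r) := by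
  induction n with
  | zero =>
    intro r h1 h2 S
    refine ⟨S, fun k => ?_⟩
    have : r = 0 := by omega
    simp [this]
  | succ n ih =>
    intro r h1 h2 S
    obtain ⟨S₁, hS₁⟩ := dec (r % 2) (by omega) S
    obtain ⟨T, hT⟩ := ih (r / 2) (by omega) (by omega) S₁
    refine ⟨T, fun k => ?_⟩
    rw [hT, hS₁]
    congr 1
    have hr : r = 2 * (r / 2) + r % 2 := by omega
    rw [show 2 * (2 ^ n * k + r / 2) + r % 2 = 2 ^ (n + 1) * k + (2 * (r / 2) + r % 2) by ring]
    omega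

end Stmt1Aux

theorem stmt_1 (S : RatFunc ℂ) (n : ℕ) (j : ℤ) (hj1 : 1 ≤ j) (hj2 : j ≤ 2 ^ n) :
    ∃! T : RatFunc ℂ, ∀ k : ℤ, coeffL T k = coeffL S (2 ^ n * k + j - 1) := by
  obtain ⟨T, hT⟩ := Stmt1Aux.main n (j - 1) (by omega) (by omega) S
  refine ⟨T, fun k => by rw [hT, add_sub_assoc], fun T' hT' => ?_⟩
  apply (@algebraMap (RatFunc ℂ) (LaurentSeries ℂ) _ _ (RatFunc.liftAlgebra _ _)).injective
  ext m
  have h1 := hT' m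
  have h2 := hT m
  rw [add_sub_assoc] at h1
  exact h1.trans h2.symm
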